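/- Truth from unbounded fulfilment (Lemma 1.1.i): if σ = ⟨A_i⟩_{i∈I} is an increasing, function-closed sequence of subsets of a structure M with I having no maximal element, and σ fulfils a sentence φ (in negation normal form), then φ is true in the substructure B of M with domain ⋃_{i∈I} A_i. -/

import Mathlib

open FirstOrder FirstOrder.Language FirstOrder.Language.Structure

universe u v w

/-- First-order formulas in negation normal form over the language `L`, with
free variables among `Fin n`. -/
inductive NNF (L : FirstOrder.Language.{u, v}) : ℕ → Type (max u v)
  | rel {n l : ℕ} (R : L.Relations l) (ts : Fin l → L.Term (Fin n)) : NNF L n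
  | nrel {n l : ℕ} (R : L.Relations l) (ts : Fin l → L.Term (Fin n)) : NNF L n
  | equal {n : ℕ} (t₁ t₂ : L.Term (Fin n)) : NNF L n
  | nequal {n : ℕ} (t₁ t₂ : L.Term (Fin n)) : NNF L n
  | and {n : ℕ} (φ ψ : NNF L n) : NNF L n
  | or {n : ℕ} (φ ψ : NNF L n) : NNF L n
  | ex {n : ℕ} (φ : NNF L (n + 1)) : NNF L n
  | all {n : ℕ} (φ : NNF L (n + 1)) : NNF L n

variable {L : FirstOrder.Language.{u, v}} {M : Type w} [L.Structure M]

/-- The fulfilment relation `φ^σ_i`, relative to the sequence of sets `A` with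
index set `lenm σ = {i : i < len}`: existential quantifiers are witnessed in the
next level `A (i+1)`, universal quantifiers range over all later levels. -/
def ful (A : ℕ → Set M) (len : ℕ∞) : {n : ℕ} → NNF L n → (Fin n → M) → ℕ → Prop
  | _, .rel R ts, v, _ => RelMap R fun j => (ts j).realize v
  | _, .nrel R ts, v, _ => ¬ RelMap R fun j => (ts j).realize v
  | _, .equal t₁ t₂, v, _ => t₁.realize v = t₂.realize v
  | _, .nequal t₁ t₂, v, _ => t₁.realize v ≠ t₂.realize v
  | _, .and φ ψ, v, i => ful A len φ v i ∧ ful A len ψ v i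
  | _, .or φ ψ, v, i => ful A len φ v i ∨ ful A len ψ v i
  | _, .ex φ, v, i => ∃ x ∈ A (i + 1), ful A len φ (Fin.snoc v x) i
  | _, .all φ, v, i =>
      ∀ j : ℕ, i ≤ j → (j : ℕ∞) < len → ∀ x ∈ A j, ful A len φ (Fin.snoc v x) j

/-- The sequence `⟨A_i⟩_{i < len}` fulfils `φ` at the valuation `v`: it is
increasing, closed under the functions of `L` (with constants in `A 0`), and
`φ^σ_0` holds. -/
def Fulfils (A : ℕ → Set M) (len : ℕ∞) {n : ℕ} (φ : NNF L n) (v : Fin n → M) : Prop :=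
  (∀ i : ℕ, (i : ℕ∞) < len → A i ⊆ A (i + 1)) ∧
  (∀ i : ℕ, (i : ℕ∞) < len → ∀ {l : ℕ} (f : L.Functions l) (x : Fin l → M),
      (∀ j, x j ∈ A i) → funMap f x ∈ A (i + 1)) ∧
  (∀ c : L.Constants, funMap c (fun j : Fin 0 => j.elim0) ∈ A 0) ∧
  ful A len φ v 0

/-- Ordinary (Tarskian) truth of an NNF formula in a structure. -/
def NNF.Realize {N : Type*} [L.Structure N] : {n : ℕ} → NNF L n → (Fin n → N) → Prop
  | _, .rel R ts, v => RelMap R fun j => (ts j).realize v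
  | _, .nrel R ts, v => ¬ RelMap R fun j => (ts j).realize v
  | _, .equal t₁ t₂, v => t₁.realize v = t₂.realize v
  | _, .nequal t₁ t₂, v => t₁.realize v ≠ t₂.realize v
  | _, .and φ ψ, v => NNF.Realize φ v ∧ NNF.Realize ψ v
  | _, .or φ ψ, v => NNF.Realize φ v ∨ NNF.Realize ψ v
  | _, .ex φ, v => ∃ x : N, NNF.Realize φ (Fin.snoc v x)
  | _, .all φ, v => ∀ x : N, NNF.Realize φ (Fin.snoc v x)

/-- Lemma 1.1.i (truth from unbounded fulfilment): if the increasing,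
function-closed sequence `⟨A_i⟩_{i<ω}` fulfils the sentence `φ`, then `φ` is
true in the substructure of `M` with domain `⋃_i A_i`. -/

private theorem Amono {A : ℕ → Set M} (h : ∀ i : ℕ, ((i:ℕ∞) < ⊤) → A i ⊆ A (i+1)) :
    ∀ {i j : ℕ}, i ≤ j → A i ⊆ A j := by
  intro i j hij
  induction j with
  | zero => rw [Nat.le_zero.mp hij]
  | succ k ih =>
    rcases Nat.lt_or_ge i (k+1) with hl | hg
    · exact (ih (Nat.lt_succ_iff.mp hl)).trans
        (h k (by simp [lt_top_iff_ne_top]))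
    · rw [Nat.le_antisymm hij hg]

private theorem key {A : ℕ → Set M} (hmono : ∀ i : ℕ, ((i:ℕ∞) < ⊤) → A i ⊆ A (i+1))
    {S : L.Substructure M} (hS : (S : Set M) = ⋃ i, A i) :
    ∀ {n : ℕ} (φ : NNF L n) (v : Fin n → S) (i : ℕ),
      ful A ⊤ φ (fun k => (v k : M)) i → NNF.Realize (N := ↥S) φ v := by
  intro n φ
  induction φ with
  | rel R ts =>
    intro v i hf
    have : ∀ j, (Subtype.val : S → M) ((ts j).realize v) = (ts j).realize (fun k => (v k : M)) := by
      intro j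
      rw [show (fun k => ((v k : M))) = (S.subtype) ∘ v from rfl, HomClass.realize_term]
      rfl
    show RelMap R fun j => (((ts j).realize v : S) : M)
    simpa [this, ful] using hf
  | nrel R ts =>
    intro v i hf
    have : ∀ j, (Subtype.val : S → M) ((ts j).realize v) = (ts j).realize (fun k => (v k : M)) := by
      intro j
      rw [show (fun k => ((v k : M))) = (S.subtype) ∘ v from rfl, HomClass.realize_term]
      rfl
    show ¬ RelMap R fun j => (((ts j).realize v : S) : M)
    simpa [this, ful] using hf
  | equal t₁ t₂ =>
    intro v i hf
    have h1 : ∀ t : L.Term (Fin _), (Subtype.val : S → M) (t.realize v) = t.realize (fun k => (v k : M)) := by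
      intro t
      rw [show (fun k => ((v k : M))) = (S.subtype) ∘ v from rfl, HomClass.realize_term]
      rfl
    exact Subtype.val_injective (by rw [h1, h1]; exact hf)
  | nequal t₁ t₂ =>
    intro v i hf
    have h1 : ∀ t : L.Term (Fin _), (Subtype.val : S → M) (t.realize v) = t.realize (fun k => (v k : M)) := by
      intro t
      rw [show (fun k => ((v k : M))) = (S.subtype) ∘ v from rfl, HomClass.realize_term]
      rfl
    intro heq
    exact hf (by rw [← h1, ← h1, heq])
  | and φ ψ ihφ ihψ =>
    intro v i hf
    exact ⟨ihφ v i hf.1, ihψ v i hf.2⟩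
  | or φ ψ ihφ ihψ =>
    intro v i hf
    rcases hf with hf | hf
    · exact Or.inl (ihφ v i hf)
    · exact Or.inr (ihψ v i hf)
  | ex φ ih =>
    intro v i hf
    obtain ⟨x, hx, hfx⟩ := hf
    have hxS : x ∈ S := by rw [SetLike.mem_coe.symm, hS]; exact Set.mem_iUnion.2 ⟨i+1, hx⟩
    refine ⟨⟨x, hxS⟩, ih (Fin.snoc v ⟨x, hxS⟩) i ?_⟩
    have : (fun k => ((Fin.snoc v ⟨x, hxS⟩ : Fin _ → S) k : M)) = Fin.snoc (fun k => (v k : M)) x := by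
      funext k
      refine Fin.lastCases ?_ ?_ k <;> simp
    rw [this]; exact hfx
  | all φ ih =>
    intro v i hf x
    have hxU : (x : M) ∈ ⋃ j, A j := by rw [← hS]; exact x.2
    obtain ⟨j, hj⟩ := Set.mem_iUnion.mp hxU
    have hij : (x : M) ∈ A (max i j) := Amono hmono (le_max_right i j) hj
    have hfx := hf (max i j) (le_max_left i j) (by simp [lt_top_iff_ne_top]) (x : M) hij
    refine ih (Fin.snoc v x) (max i j) ?_
    have : (fun k => ((Fin.snoc v x : Fin _ → S) k : M)) = Fin.snoc (fun k => (v k : M)) (x : M) := by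
      funext k
      refine Fin.lastCases ?_ ?_ k <;> simp
    rw [this]; exact hfx

theorem stmt15 (A : ℕ → Set M) (φ : NNF L 0)
    (h : Fulfils A ⊤ φ (fun i => i.elim0))
    (S : L.Substructure M) (hS : (S : Set M) = ⋃ i, A i) :
    NNF.Realize (N := ↥S) φ (fun i => i.elim0) := by
  have := key (L := L) h.1 hS φ (fun i => i.elim0) 0 ?_
  · exact this
  · have hf := h.2.2.2
    convert hf using 2
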